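/- The number of ordered pairs of distinct cells ((i,x),(j,y)) in an N×N grid with j > i that lie on a common diagonal (i.e., |i−j| = |x−y|) equals N²(N−1) − N(N−1) − N(N−1)(N−2)/3. -/

import Mathlib

open Finset

private lemma countK (N d : ℕ) (hd : 1 ≤ d) :
    ∑ x ∈ range N, ∑ y ∈ range N, (if ((x:ℤ) - y).natAbs = d then 1 else 0) = 2 * (N - d) := by
  have hrow : ∀ x ∈ range N, ∑ y ∈ range N, (if ((x:ℤ) - y).natAbs = d then 1 else 0)
      = (if x + d < N then 1 else 0) + (if d ≤ x then 1 else 0) := by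
    intro x hx
    rw [mem_range] at hx
    have : ∀ y ∈ range N, (if ((x:ℤ) - y).natAbs = d then 1 else 0)
        = (if y = x + d then 1 else 0) + (if d ≤ x ∧ y = x - d then 1 else 0) := by
      intro y _
      by_cases h1 : y = x + d
      · have : ¬ (d ≤ x ∧ y = x - d) := by omega
        simp [h1, this]
        omega
      · by_cases h2 : d ≤ x ∧ y = x - d
        · have : ((x:ℤ) - y).natAbs = d := by omega
          simp [h1, h2, this]
          omega
        · have : ((x:ℤ) - y).natAbs ≠ d := by omega
          simp [h1, h2, this]
    rw [sum_congr rfl this, sum_add_distrib]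
    congr 1
    · rw [Finset.sum_ite_eq' (range N) (x + d) (fun _ => 1)]
      simp [mem_range]
    · by_cases h : d ≤ x
      · simp only [h, true_and]
        rw [Finset.sum_ite_eq' (range N) (x - d) (fun _ => 1)]
        simp [mem_range]
        omega
      · simp [h]
  rw [sum_congr rfl hrow, sum_add_distrib]
  have h1 : ∑ x ∈ range N, (if x + d < N then 1 else 0) = N - d := by
    rw [← Finset.card_filter]
    have : (range N).filter (fun x => x + d < N) = range (N - d) := by
      ext a; simp [mem_range]; omega
    rw [this, card_range]
  have h2 : ∑ x ∈ range N, (if d ≤ x then 1 else 0) = N - d := by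
    rw [← Finset.card_filter]
    have : (range N).filter (fun x => d ≤ x) = Ico d N := by
      ext a; simp [mem_range, mem_Ico]; omega
    rw [this, Nat.card_Ico]
  rw [h1, h2]; ring

private lemma sumsq (N : ℕ) : 6 * ∑ t ∈ range N, t ^ 2 = N * (N - 1) * (2 * N - 1) := by
  induction N with
  | zero => simp
  | succ n ih =>
    have e1 : n + 1 - 1 = n := by omega
    have e2 : 2 * (n + 1) - 1 = 2 * n + 1 := by omega
    rw [sum_range_succ, Nat.mul_add, ih, e1, e2]
    cases n with
    | zero => simp
    | succ m =>
      have e3 : m + 1 - 1 = m := by omega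
      have e4 : 2 * (m + 1) - 1 = 2 * m + 1 := by omega
      rw [e3, e4]; ring

private lemma dvd3 (N : ℕ) : 3 ∣ N * (N - 1) * (N - 2) := by
  induction N with
  | zero => simp
  | succ n ih =>
    match n, ih with
    | 0, _ => simp
    | 1, _ => simp
    | (m+2), ih =>
      obtain ⟨k, hk⟩ := ih
      refine ⟨k + (m + 2) * (m + 1), ?_⟩
      have e1 : m + 2 - 1 = m + 1 := by omega
      have e2 : m + 2 - 2 = m := by omega
      have e3 : m + 2 + 1 - 1 = m + 2 := by omega
      have e4 : m + 2 + 1 - 2 = m + 1 := by omega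
      rw [e1, e2] at hk
      rw [e3, e4]
      calc (m+2+1) * (m+2) * (m+1) = (m + 2) * (m + 1) * m + 3 * ((m+2)*(m+1)) := by ring
        _ = 3 * k + 3 * ((m+2)*(m+1)) := by rw [hk]
        _ = 3 * (k + (m + 2) * (m + 1)) := by ring

private lemma final (N : ℕ) : ∑ t ∈ range N, 2 * t * t
    = N ^ 2 * (N - 1) - N * (N - 1) - N * (N - 1) * (N - 2) / 3 := by
  obtain ⟨k, hk⟩ := dvd3 N
  have hdiv : N * (N - 1) * (N - 2) / 3 = k := by rw [hk]; omega
  have hsq : N ^ 2 * (N - 1) = N * (N - 1) * (N - 1) + N * (N - 1) := by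
    cases N with
    | zero => simp
    | succ m =>
      have e1 : m + 1 - 1 = m := by omega
      rw [e1]; ring
  have hS : 3 * ∑ t ∈ range N, 2 * t * t = N * (N - 1) * (2 * N - 1) := by
    have h6 := sumsq N
    have h2 : ∑ t ∈ range N, 2 * t * t = 2 * ∑ t ∈ range N, t ^ 2 := by
      rw [Finset.mul_sum]; exact sum_congr rfl fun t _ => by ring
    omega
  have key : N * (N - 1) * (2 * N - 1) + N * (N - 1) * (N - 2)
      = 3 * (N * (N - 1) * (N - 1)) := by
    match N with
    | 0 => simp
    | 1 => simp
    | (m+2) =>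
      have e1 : m + 2 - 1 = m + 1 := by omega
      have e2 : m + 2 - 2 = m := by omega
      have e3 : 2 * (m + 2) - 1 = 2 * m + 3 := by omega
      rw [e1, e2, e3]; ring
  rw [hdiv, hsq, hk] at *
  omega

theorem card_diagonal_pairs (N : ℕ) :
    ((Finset.univ : Finset ((Fin N × Fin N) × (Fin N × Fin N))).filter
        fun p => p.1.1 < p.2.1 ∧
          ((p.1.1 : ℤ) - (p.2.1 : ℤ)).natAbs = ((p.1.2 : ℤ) - (p.2.2 : ℤ)).natAbs).card
      = N ^ 2 * (N - 1) - N * (N - 1) - N * (N - 1) * (N - 2) / 3 := by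
  have step1 : ((Finset.univ : Finset ((Fin N × Fin N) × (Fin N × Fin N))).filter
        fun p => p.1.1 < p.2.1 ∧
          ((p.1.1 : ℤ) - (p.2.1 : ℤ)).natAbs = ((p.1.2 : ℤ) - (p.2.2 : ℤ)).natAbs).card
      = ∑ i ∈ range N, ∑ x ∈ range N, ∑ j ∈ range N, ∑ y ∈ range N,
          if i < j ∧ ((i:ℤ) - j).natAbs = ((x:ℤ) - y).natAbs then 1 else 0 := by
    rw [Finset.card_filter]
    rw [Fintype.sum_prod_type]
    simp_rw [Fintype.sum_prod_type, Fin.lt_def]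
    rw [Fin.sum_univ_eq_sum_range (fun i => ∑ x : Fin N, ∑ j : Fin N, ∑ y : Fin N,
            if i < ↑j ∧ ((i:ℤ) - (j:ℕ)).natAbs = (((x:ℕ):ℤ) - (y:ℕ)).natAbs then 1 else 0)]
    refine sum_congr rfl fun i _ => ?_
    rw [Fin.sum_univ_eq_sum_range (fun x => ∑ j : Fin N, ∑ y : Fin N,
            if i < ↑j ∧ ((i:ℤ) - (j:ℕ)).natAbs = ((x:ℤ) - (y:ℕ)).natAbs then 1 else 0)]
    refine sum_congr rfl fun x _ => ?_
    rw [Fin.sum_univ_eq_sum_range (fun j => ∑ y : Fin N,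
            if i < j ∧ ((i:ℤ) - j).natAbs = ((x:ℤ) - (y:ℕ)).natAbs then 1 else 0)]
    refine sum_congr rfl fun j _ => ?_
    rw [Fin.sum_univ_eq_sum_range (fun y =>
            if i < j ∧ ((i:ℤ) - j).natAbs = ((x:ℤ) - y).natAbs then 1 else 0)]
  rw [step1]
  have step2 : ∀ i ∈ range N, ∑ x ∈ range N, ∑ j ∈ range N, ∑ y ∈ range N,
          (if i < j ∧ ((i:ℤ) - j).natAbs = ((x:ℤ) - y).natAbs then 1 else 0)
      = ∑ j ∈ range N, (if i < j then 2 * (N - (j - i)) else 0) := by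
    intro i _
    rw [Finset.sum_comm]
    refine sum_congr rfl fun j _ => ?_
    by_cases h : i < j
    · have hd : ((i:ℤ) - j).natAbs = j - i := by omega
      have hc : ∀ x y : ℕ, (i < j ∧ ((i:ℤ) - j).natAbs = ((x:ℤ) - y).natAbs)
          ↔ (((x:ℤ) - y).natAbs = j - i) := by
        intro x y; rw [hd]; constructor
        · rintro ⟨-, h2⟩; omega
        · intro h2; exact ⟨h, h2.symm⟩
      simp_rw [hc]
      rw [countK N (j - i) (by omega), if_pos h]
    · simp [h]
  rw [sum_congr rfl step2]
  have step3 : ∀ i ∈ range N, ∑ j ∈ range N, (if i < j then 2 * (N - (j - i)) else 0)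
      = ∑ t ∈ range N, (if i < t then 2 * t else 0) := by
    intro i hi
    rw [mem_range] at hi
    rw [← sum_filter, ← sum_filter]
    have hfil : (range N).filter (fun j => i < j) = Ico (i + 1) N := by
      ext a; simp [mem_range, mem_Ico]; omega
    rw [hfil]
    refine Finset.sum_nbij' (fun j => N + i - j) (fun t => N + i - t) ?_ ?_ ?_ ?_ ?_
    · intro a ha; rw [mem_Ico] at *; omega
    · intro a ha; rw [mem_Ico] at *; omega
    · intro a ha; rw [mem_Ico] at ha; omega
    · intro a ha; rw [mem_Ico] at ha; omega
    · intro a ha; rw [mem_Ico] at ha; omega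
  rw [sum_congr rfl step3, Finset.sum_comm]
  have step4 : ∀ t ∈ range N, ∑ i ∈ range N, (if i < t then 2 * t else 0) = 2 * t * t := by
    intro t ht
    rw [mem_range] at ht
    rw [← sum_filter]
    have hfil : (range N).filter (fun i => i < t) = range t := by
      ext a; simp [mem_range]; omega
    rw [hfil, sum_const, card_range, smul_eq_mul]
    ring
  rw [sum_congr rfl step4]
  exact final N
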